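/- arXiv:1712.01324 — 4 statements merged into one kernel-verified Lean document; each statement's English description precedes it below -/
import Mathlib

section
/- For all real a, x and every integer n ≥ 0, the falling (p,q)-power expands as (a ⊖ x)_{p,q}^n = ∑_{k=0}^{n} [n choose k]_{p,q} q^{k(k−1)/2} p^{(n−k)(n−k−1)/2} (−x)^k a^{n−k}. -/
noncomputable section
open Finset Polynomial

/-- The (p,q)-number `[n]_{p,q} = (p^n - q^n)/(p - q)`. -/
def pqNum (p q : ℝ) (n : ℕ) : ℝ := (p ^ n - q ^ n) / (p - q)

/-- The (p,q)-factorial `[n]_{p,q}! = ∏_{k=1}^n [k]_{p,q}`. -/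
def pqFact (p q : ℝ) (n : ℕ) : ℝ := ∏ k ∈ Finset.Icc 1 n, pqNum p q k

/-- The (p,q)-binomial coefficient. -/
def pqBinom (p q : ℝ) (n k : ℕ) : ℝ := pqFact p q n / (pqFact p q k * pqFact p q (n - k))

/-- The (p,q)-derivative on polynomials: the linear operator with `D(X^n) = [n]_{p,q} X^(n-1)`. -/
def pqDeriv (p q : ℝ) (f : Polynomial ℝ) : Polynomial ℝ :=
  f.sum fun n a => Polynomial.C (a * pqNum p q n) * Polynomial.X ^ (n - 1)

/-- The (p,q)-derivative on formal power series, acting coefficientwise by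
`D(X^n) = [n]_{p,q} X^(n-1)`. -/
def pqDerivPS (p q : ℝ) (f : PowerSeries ℝ) : PowerSeries ℝ :=
  PowerSeries.mk fun n => pqNum p q (n + 1) * PowerSeries.coeff (n + 1) f

/-- The double (p,q)-factorial `[2m]_{p,q}!! = ∏_{k=1}^m [2k]_{p,q}`. -/
def pqDoubleFact (p q : ℝ) (m : ℕ) : ℝ := ∏ k ∈ Finset.Icc 1 m, pqNum p q (2 * k)

/-- A sequence of real polynomials of exact degree `n` is (p,q)-Appell when
`D_{p,q} f_{n+1}(x) = [n+1]_{p,q} f_n(p x)` for all `n ≥ 0` and all `x`. -/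
def IsPQAppell (p q : ℝ) (f : ℕ → Polynomial ℝ) : Prop :=
  (∀ n, (f n).natDegree = n) ∧
    ∀ (n : ℕ) (x : ℝ), (pqDeriv p q (f (n + 1))).eval x = pqNum p q (n + 1) * (f n).eval (p * x)

lemma tri : ∀ m : ℕ, (m+1)*m/2 = m*(m-1)/2 + m
  | 0 => rfl
  | (m+1) => by
    have h : (m+1+1)*(m+1) = (m+1)*m + 2*(m+1) := by ring
    rw [h, Nat.add_mul_div_left _ _ (by norm_num : 0 < 2)]
    simp

lemma pqNum_pos {p q : ℝ} (hq : 0 < q) (hpq : q < p) (k : ℕ) (hk : 1 ≤ k) :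
    0 < pqNum p q k := by
  unfold pqNum
  apply div_pos _ (by linarith)
  have := pow_lt_pow_left₀ hpq hq.le (by omega : k ≠ 0)
  linarith

lemma pqFact_zero (p q : ℝ) : pqFact p q 0 = 1 := by simp [pqFact]

lemma pqFact_succ (p q : ℝ) (n : ℕ) :
    pqFact p q (n+1) = pqFact p q n * pqNum p q (n+1) := by
  unfold pqFact
  rw [Finset.prod_Icc_succ_top (by omega : 1 ≤ n + 1)]

lemma pqFact_pos {p q : ℝ} (hq : 0 < q) (hpq : q < p) (n : ℕ) : 0 < pqFact p q n := by
  unfold pqFact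
  exact Finset.prod_pos fun k hk => pqNum_pos hq hpq k (Finset.mem_Icc.mp hk).1

lemma pqNum_add {p q : ℝ} (hq : 0 < q) (hpq : q < p) (a b : ℕ) :
    pqNum p q (a + b) = p ^ a * pqNum p q b + q ^ b * pqNum p q a := by
  unfold pqNum
  have : p - q ≠ 0 := by intro h; nlinarith
  field_simp
  ring

lemma pqBinom_zero {p q : ℝ} (hq : 0 < q) (hpq : q < p) (n : ℕ) : pqBinom p q n 0 = 1 := by
  have h := (pqFact_pos (p := p) (q := q) hq hpq n).ne'
  simp [pqBinom, pqFact_zero]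
  simp [h]

lemma pqBinom_self {p q : ℝ} (hq : 0 < q) (hpq : q < p) (n : ℕ) : pqBinom p q n n = 1 := by
  have h := (pqFact_pos (p := p) (q := q) hq hpq n).ne'
  simp [pqBinom, pqFact_zero]
  simp [h]

lemma pascal {p q : ℝ} (hq : 0 < q) (hpq : q < p) (n k : ℕ) (hk : k < n) :
    pqBinom p q (n+1) (k+1) =
      p ^ (k+1) * pqBinom p q n (k+1) + q ^ (n-k) * pqBinom p q n k := by
  obtain ⟨j, rfl⟩ : ∃ j, n = k + 1 + j := ⟨n - (k+1), by omega⟩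
  have h1 : k + 1 + j + 1 - (k + 1) = j + 1 := by omega
  have h2 : k + 1 + j - (k + 1) = j := by omega
  have h3 : k + 1 + j - k = j + 1 := by omega
  unfold pqBinom
  rw [h1, h2, h3]
  have hkey : pqNum p q (k + 1 + j + 1)
      = p ^ (k+1) * pqNum p q (j+1) + q ^ (j+1) * pqNum p q (k+1) := by
    have h4 : k + 1 + j + 1 = (k + 1) + (j + 1) := by omega
    rw [h4, pqNum_add hq hpq]
  have e1 : pqFact p q (k + 1 + j + 1) = pqFact p q (k + 1 + j) * pqNum p q (k + 1 + j + 1) :=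
    pqFact_succ _ _ _
  have e2 : pqFact p q (j + 1) = pqFact p q j * pqNum p q (j + 1) := pqFact_succ _ _ _
  have e3 : pqFact p q (k + 1) = pqFact p q k * pqNum p q (k + 1) := pqFact_succ _ _ _
  have n1 := (pqFact_pos hq hpq (k+1+j)).ne'
  have n2 := (pqFact_pos hq hpq j).ne'
  have n3 := (pqFact_pos hq hpq k).ne'
  have n4 := (pqNum_pos hq hpq (j+1) (by omega)).ne'
  have n5 := (pqNum_pos hq hpq (k+1) (by omega)).ne'
  rw [e1, e2, e3, hkey]
  field_simp


/-- the expansion of the falling (p,q)-power. -/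
theorem pq_falling_power_expansion (p q : ℝ) (hq : 0 < q) (hpq : q < p) (a x : ℝ) (n : ℕ) :
    (∏ j ∈ Finset.range n, (a * p ^ j - q ^ j * x)) =
      ∑ k ∈ Finset.range (n + 1),
        pqBinom p q n k * q ^ (k * (k - 1) / 2) * p ^ ((n - k) * (n - k - 1) / 2) *
          (-x) ^ k * a ^ (n - k) := by
  induction n with
  | zero => simp [pqBinom, pqFact_zero]
  | succ n ih =>
    set T : ℕ → ℕ → ℝ := fun n k =>
      pqBinom p q n k * q ^ (k * (k - 1) / 2) * p ^ ((n - k) * (n - k - 1) / 2) *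
        (-x) ^ k * a ^ (n - k) with hT
    show (∏ j ∈ Finset.range (n+1), (a * p ^ j - q ^ j * x)) = ∑ k ∈ Finset.range (n + 2), T (n+1) k
    have ih' : (∏ j ∈ Finset.range n, (a * p ^ j - q ^ j * x)) = ∑ k ∈ Finset.range (n + 1), T n k := ih
    rw [Finset.prod_range_succ, ih']
    have key : ∀ k ∈ Finset.range n, T (n+1) (k+1)
        = a * p ^ n * T n (k+1) + (-(q ^ n * x)) * T n k := by
      intro k hk
      have hkn : k < n := Finset.mem_range.mp hk
      obtain ⟨m, rfl⟩ : ∃ m, n = k + 1 + m := ⟨n - k - 1, by omega⟩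
      simp only [hT]
      rw [pascal hq hpq (k+1+m) k (by omega)]
      simp only [show k+1+m+1 - (k+1) = m+1 from by omega,
        show k+1+m - (k+1) = m from by omega,
        show k+1+m - k = m+1 from by omega,
        show k+1-1 = k from by omega,
        show m+1-1 = m from by omega]
      rw [show (k+1) * k / 2 = k * (k-1) / 2 + k from tri k,
        show (m+1) * m / 2 = m * (m-1) / 2 + m from tri m]
      rw [pow_add, pow_add]
      ring
    have b0 : T (n+1) 0 = a * p ^ n * T n 0 := by
      simp only [hT]
      rw [pqBinom_zero hq hpq, pqBinom_zero hq hpq]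
      simp only [Nat.sub_zero]
      rw [show (n+1) * (n+1-1) / 2 = n * (n-1) / 2 + n from by simpa using tri n]
      rw [pow_add, pow_succ]
      ring
    have bn : T (n+1) (n+1) = (-(q ^ n * x)) * T n n := by
      simp only [hT]
      rw [pqBinom_self hq hpq, pqBinom_self hq hpq]
      simp only [Nat.sub_self]
      rw [show (n+1) * (n+1-1) / 2 = n * (n-1) / 2 + n from by simpa using tri n]
      rw [pow_add, pow_succ]
      ring
    have hL1 : ∑ k ∈ Finset.range (n + 1), T n k
        = (∑ k ∈ Finset.range n, T n (k+1)) + T n 0 := Finset.sum_range_succ' _ n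
    have hL2 : ∑ k ∈ Finset.range (n + 1), T n k
        = (∑ k ∈ Finset.range n, T n k) + T n n := Finset.sum_range_succ _ n
    have hR : ∑ k ∈ Finset.range (n + 2), T (n+1) k
        = (∑ k ∈ Finset.range n, T (n+1) (k+1)) + T (n+1) (n+1) + T (n+1) 0 := by
      rw [Finset.sum_range_succ' _ (n+1), Finset.sum_range_succ]
    rw [hR, Finset.sum_congr rfl key, Finset.sum_add_distrib, b0, bn]
    rw [← Finset.mul_sum, ← Finset.mul_sum]
    have expand : (∑ k ∈ Finset.range (n + 1), T n k) * (a * p ^ n - q ^ n * x)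
        = a * p ^ n * ((∑ k ∈ Finset.range n, T n (k+1)) + T n 0)
          + (-(q ^ n * x)) * ((∑ k ∈ Finset.range n, T n k) + T n n) := by
      rw [← hL1, ← hL2]; ring
    rw [expand]
    ring
end
end

section
/- Every (p,q)-Appell polynomial sequence has a ∗-inverse: if (f_n) is a (p,q)-Appell sequence with coefficient sequence (a_k), a_0 ≠ 0 (so f_n(x) = ∑_{k=0}^{n} [n choose k]_{p,q} p^{(n−k)(n−k−1)/2} a_k x^{n−k}), then there exists a sequence (b_k) with b_0 ≠ 0 such that ∑_{k=0}^{n} [n choose k]_{p,q} a_k b_{n−k} equals 1 for n = 0 and 0 for all n ≥ 1; consequently the (p,q)-Appell sequence g with coefficients (b_k) satisfies (f∗g)_n(x) = (g∗f)_n(x) = p^{n(n−1)/2} x^n for all n, i.e. f∗g = g∗f = I, where I is the identity (p,q)-Appell sequence I_n(x) = p^{n(n−1)/2} x^n. -/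
noncomputable section
open Finset Polynomial

section MyAux
variable {p q : ℝ}

lemma myPqNum_pos (hq : 0 < q) (hpq : q < p) {k : ℕ} (hk : k ≠ 0) : 0 < pqNum p q k := by
  have h1 : q ^ k < p ^ k := pow_lt_pow_left₀ hpq hq.le hk
  exact div_pos (sub_pos.mpr h1) (sub_pos.mpr hpq)

lemma myPqFact_pos (hq : 0 < q) (hpq : q < p) (n : ℕ) : 0 < pqFact p q n := by
  refine Finset.prod_pos fun k hk => myPqNum_pos hq hpq ?_
  simp only [Finset.mem_Icc] at hk; omega

lemma myPqFact_zero : pqFact p q 0 = 1 := by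
  unfold pqFact
  rw [Finset.Icc_eq_empty (by omega)]; simp

lemma myPqFact_ne (hq : 0 < q) (hpq : q < p) (n : ℕ) : pqFact p q n ≠ 0 :=
  (myPqFact_pos hq hpq n).ne'

lemma myPqBinom_self (hq : 0 < q) (hpq : q < p) (n : ℕ) : pqBinom p q n n = 1 := by
  unfold pqBinom
  rw [Nat.sub_self, myPqFact_zero, mul_one, div_self (myPqFact_ne hq hpq n)]

lemma myPqBinom_symm (hq : 0 < q) (hpq : q < p) {k n : ℕ} (h : k ≤ n) :
    pqBinom p q n k = pqBinom p q n (n - k) := by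
  unfold pqBinom
  rw [Nat.sub_sub_self h, mul_comm]

lemma myPqBinom_tri (hq : 0 < q) (hpq : q < p) {m k n : ℕ} (hmk : m ≤ k) (hkn : k ≤ n) :
    pqBinom p q n k * pqBinom p q k m = pqBinom p q n m * pqBinom p q (n - m) (k - m) := by
  obtain ⟨i, rfl⟩ := Nat.exists_eq_add_of_le hmk
  obtain ⟨j, rfl⟩ := Nat.exists_eq_add_of_le hkn
  unfold pqBinom
  rw [show m + i + j - (m + i) = j by omega, show m + i - m = i by omega,
    show m + i + j - m = i + j by omega, show i + j - i = j by omega]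
  have h0 := myPqFact_ne hq hpq (p := p) (q := q)
  field_simp
  rw [div_eq_div_iff (by simp [h0]) (by simp [h0])]
  ring

lemma myKey (hq : 0 < q) (hpq : q < p) (c d : ℕ → ℝ)
    (hcd : ∀ N : ℕ, ∑ i ∈ Finset.range (N + 1), pqBinom p q N i * c (N - i) * d i
      = if N = 0 then 1 else 0) (n : ℕ) (x : ℝ) :
    ∑ k ∈ Finset.range (n + 1), pqBinom p q n k * c (n - k) *
      (∑ j ∈ Finset.range (k + 1),
        pqBinom p q k j * p ^ ((k - j) * (k - j - 1) / 2) * d j * x ^ (k - j))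
    = p ^ (n * (n - 1) / 2) * x ^ n := by
  have step1 : ∑ k ∈ Finset.range (n + 1), pqBinom p q n k * c (n - k) *
      (∑ j ∈ Finset.range (k + 1),
        pqBinom p q k j * p ^ ((k - j) * (k - j - 1) / 2) * d j * x ^ (k - j))
      = ∑ k ∈ Finset.range (n + 1), ∑ m ∈ Finset.range (k + 1),
        pqBinom p q n k * c (n - k) *
          (pqBinom p q k m * p ^ (m * (m - 1) / 2) * d (k - m) * x ^ m) := by
    refine Finset.sum_congr rfl fun k hk => ?_
    rw [← Finset.sum_range_reflect
      (fun j => pqBinom p q k j * p ^ ((k - j) * (k - j - 1) / 2) * d j * x ^ (k - j)) (k + 1),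
      Finset.mul_sum]
    refine Finset.sum_congr rfl fun m hm => ?_
    have hm' : m ≤ k := Nat.lt_succ_iff.mp (Finset.mem_range.mp hm)
    rw [show k + 1 - 1 - m = k - m by omega, show k - (k - m) = m by omega,
      ← myPqBinom_symm hq hpq hm']
  rw [step1]
  simp only [Finset.range_eq_Ico]
  rw [← Finset.sum_Ico_Ico_comm 0 (n + 1) (fun m k =>
      pqBinom p q n k * c (n - k) * (pqBinom p q k m * p ^ (m * (m - 1) / 2) * d (k - m) * x ^ m))]
  have step3 : ∀ m ∈ Finset.Ico 0 (n + 1),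
      (∑ k ∈ Finset.Ico m (n + 1), pqBinom p q n k * c (n - k) *
        (pqBinom p q k m * p ^ (m * (m - 1) / 2) * d (k - m) * x ^ m))
      = if n - m = 0 then p ^ (m * (m - 1) / 2) * x ^ m else 0 := by
    intro m hm
    have hmn : m ≤ n := by simp only [Finset.mem_Ico] at hm; omega
    rw [Finset.sum_Ico_eq_sum_range, show n + 1 - m = (n - m) + 1 by omega]
    have hterm : ∀ i ∈ Finset.range ((n - m) + 1),
        pqBinom p q n (m + i) * c (n - (m + i)) *
          (pqBinom p q (m + i) m * p ^ (m * (m - 1) / 2) * d (m + i - m) * x ^ m)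
        = (p ^ (m * (m - 1) / 2) * x ^ m * pqBinom p q n m) *
          (pqBinom p q (n - m) i * c ((n - m) - i) * d i) := by
      intro i hi
      have hi' : i ≤ n - m := Nat.lt_succ_iff.mp (Finset.mem_range.mp hi)
      have h2 : m + i ≤ n := by omega
      have htri := myPqBinom_tri hq hpq (Nat.le_add_right m i) h2
      rw [show m + i - m = i by omega] at htri ⊢
      rw [show n - (m + i) = (n - m) - i by omega]
      linear_combination (c ((n - m) - i) * d i * p ^ (m * (m - 1) / 2) * x ^ m) * htri
    rw [Finset.sum_congr rfl hterm, ← Finset.mul_sum, hcd (n - m)]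
    by_cases h : n - m = 0
    · have : m = n := by omega
      subst this
      simp [myPqBinom_self hq hpq, h]
    · simp [h]
  rw [Finset.sum_congr rfl step3]
  rw [Finset.sum_eq_single_of_mem n (by simp) (fun m hm hne => by
    have : n - m ≠ 0 := by simp only [Finset.mem_Ico] at hm; omega
    simp [this])]
  simp
end MyAux

/-- every (p,q)-Appell sequence has a *-inverse, with the identity sequence
I_n(x) = p^(n(n-1)/2) x^n. -/
theorem pq_appell_star_inverse (p q : ℝ) (hq : 0 < q) (hpq : q < p)
    (a : ℕ → ℝ) (ha : a 0 ≠ 0)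
    (f : ℕ → ℝ → ℝ)
    (hf : ∀ (n : ℕ) (x : ℝ), f n x = ∑ k ∈ Finset.range (n + 1),
      pqBinom p q n k * p ^ ((n - k) * (n - k - 1) / 2) * a k * x ^ (n - k)) :
    ∃ b : ℕ → ℝ, b 0 ≠ 0 ∧
      (∀ n : ℕ, ∑ k ∈ Finset.range (n + 1), pqBinom p q n k * a k * b (n - k)
        = if n = 0 then 1 else 0) ∧
      ∀ (n : ℕ) (x : ℝ),
        (∑ k ∈ Finset.range (n + 1), pqBinom p q n k * a (n - k) *
            (∑ j ∈ Finset.range (k + 1),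
              pqBinom p q k j * p ^ ((k - j) * (k - j - 1) / 2) * b j * x ^ (k - j)))
          = p ^ (n * (n - 1) / 2) * x ^ n ∧
        (∑ k ∈ Finset.range (n + 1), pqBinom p q n k * b (n - k) * f k x)
          = p ^ (n * (n - 1) / 2) * x ^ n := by
  have hF := myPqFact_ne hq hpq (p := p) (q := q)
  set A : PowerSeries ℝ := PowerSeries.mk (fun k => a k / pqFact p q k) with hA
  have hA0 : PowerSeries.constantCoeff A ≠ 0 := by
    rw [← PowerSeries.coeff_zero_eq_constantCoeff]
    simp [hA, myPqFact_zero, ha]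
  set b : ℕ → ℝ := fun n => pqFact p q n * PowerSeries.coeff n A⁻¹ with hb
  have hb0 : b 0 ≠ 0 := by
    rw [hb]
    simp only [myPqFact_zero, one_mul, PowerSeries.coeff_zero_eq_constantCoeff,
      PowerSeries.constantCoeff_inv]
    exact inv_ne_zero hA0
  have hconv : ∀ n : ℕ, ∑ k ∈ Finset.range (n + 1), pqBinom p q n k * a k * b (n - k)
      = if n = 0 then 1 else 0 := by
    intro n
    have hmul : A * A⁻¹ = 1 := PowerSeries.mul_inv_cancel A hA0
    have hc := congrArg (PowerSeries.coeff n) hmul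
    rw [PowerSeries.coeff_mul, Finset.Nat.sum_antidiagonal_eq_sum_range_succ_mk,
      PowerSeries.coeff_one] at hc
    have hterm : ∀ k ∈ Finset.range (n + 1),
        pqBinom p q n k * a k * b (n - k)
        = pqFact p q n * (PowerSeries.coeff k A * PowerSeries.coeff (n - k) A⁻¹) := by
      intro k hk
      rw [hb, hA]
      simp only [PowerSeries.coeff_mk]
      unfold pqBinom
      field_simp
      rw [div_eq_div_iff (mul_ne_zero (hF _) (hF _)) (hF _)]
      ring
    rw [Finset.sum_congr rfl hterm, ← Finset.mul_sum, hc]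
    rcases n with _ | n
    · simp [myPqFact_zero]
    · simp
  have hconvr : ∀ N : ℕ, ∑ i ∈ Finset.range (N + 1), pqBinom p q N i * a (N - i) * b i
      = if N = 0 then 1 else 0 := by
    intro N
    rw [← hconv N, ← Finset.sum_range_reflect
      (fun k => pqBinom p q N k * a k * b (N - k)) (N + 1)]
    refine Finset.sum_congr rfl fun i hi => ?_
    have hi' : i ≤ N := Nat.lt_succ_iff.mp (Finset.mem_range.mp hi)
    rw [show N + 1 - 1 - i = N - i by omega, show N - (N - i) = i by omega,
      ← myPqBinom_symm hq hpq hi']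
  have hconvr' : ∀ N : ℕ, ∑ i ∈ Finset.range (N + 1), pqBinom p q N i * b (N - i) * a i
      = if N = 0 then 1 else 0 := by
    intro N
    rw [← hconv N]
    exact Finset.sum_congr rfl fun i _ => by ring
  refine ⟨b, hb0, hconv, fun n x => ⟨myKey hq hpq a b hconvr n x, ?_⟩⟩
  have := myKey hq hpq b a hconvr' n x
  rw [← this]
  refine Finset.sum_congr rfl fun k hk => ?_
  rw [hf k x]
end
end

section
/- Let (f_n) be a (p,q)-Appell sequence with coefficient sequence (a_k), a_0 ≠ 0, i.e. f_n(x) = ∑_{k=0}^{n} [n choose k]_{p,q} p^{(n−k)(n−k−1)/2} a_k x^{n−k}, and let (b_k) be the sequence with ∑_{k=0}^{n} [n choose k]_{p,q} a_k b_{n−k} = δ_{n,0} (which exists since a_0 ≠ 0). Then for every n ≥ 0 and every real x, x^n = p^{−n(n−1)/2} ∑_{k=0}^{n} [n choose k]_{p,q} b_k f_{n−k}(x). -/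
noncomputable section
open Finset Polynomial

lemma pqBinom_symm (p q : ℝ) {n k : ℕ} (hk : k ≤ n) :
    pqBinom p q n (n - k) = pqBinom p q n k := by
  unfold pqBinom
  rw [Nat.sub_sub_self hk, mul_comm]

lemma pqBinom_mul {p q : ℝ} (hq : 0 < q) (hpq : q < p) {n k m : ℕ} (h : k + m ≤ n) :
    pqBinom p q n k * pqBinom p q (n - k) m = pqBinom p q n m * pqBinom p q (n - m) k := by
  unfold pqBinom
  have h1 : n - k - m = n - m - k := by omega
  rw [h1]
  have hF := fun s => (pqFact_pos hq hpq s).ne'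
  field_simp [hF]

lemma sum_triangle_swap (N : ℕ) (g : ℕ → ℕ → ℝ) :
    ∑ k ∈ Finset.range N, ∑ m ∈ Finset.range (N - k), g k m
    = ∑ m ∈ Finset.range N, ∑ k ∈ Finset.range (N - m), g k m := by
  have h : ∀ k : ℕ, Finset.range (N - k) = Finset.filter (fun m => k + m < N) (Finset.range N) := by
    intro k; ext m; simp only [Finset.mem_filter, Finset.mem_range]; omega
  simp only [h, Finset.sum_filter]
  rw [Finset.sum_comm]
  refine Finset.sum_congr rfl fun m _ => Finset.sum_congr rfl fun k _ => ?_
  rw [Nat.add_comm]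


/-- expansion of the monomials in terms of a (p,q)-Appell sequence via the
inverse coefficient sequence. -/
theorem pq_appell_monomial_expansion (p q : ℝ) (hq : 0 < q) (hpq : q < p)
    (a b : ℕ → ℝ) (ha : a 0 ≠ 0)
    (hb : ∀ n : ℕ, ∑ k ∈ Finset.range (n + 1), pqBinom p q n k * a k * b (n - k)
      = if n = 0 then 1 else 0)
    (f : ℕ → ℝ → ℝ)
    (hf : ∀ (n : ℕ) (x : ℝ), f n x = ∑ k ∈ Finset.range (n + 1),
      pqBinom p q n k * p ^ ((n - k) * (n - k - 1) / 2) * a k * x ^ (n - k)) :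
    ∀ (n : ℕ) (x : ℝ),
      x ^ n = (p ^ (n * (n - 1) / 2))⁻¹ *
        ∑ k ∈ Finset.range (n + 1), pqBinom p q n k * b k * f (n - k) x := by
  have hp : 0 < p := hq.trans hpq
  -- inverse relation with a and b swapped
  have hb' : ∀ s : ℕ, ∑ k ∈ Finset.range (s + 1), pqBinom p q s k * b k * a (s - k)
      = if s = 0 then 1 else 0 := by
    intro s
    rw [← Finset.sum_range_reflect, ← hb s]
    refine Finset.sum_congr rfl fun k hk => ?_
    rw [Finset.mem_range] at hk
    have h1 : s + 1 - 1 - k = s - k := by omega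
    have h2 : s - (s - k) = k := by omega
    rw [h1, h2, pqBinom_symm p q (by omega : k ≤ s)]
    ring
  intro n x
  have key : ∑ k ∈ Finset.range (n + 1), pqBinom p q n k * b k * f (n - k) x
      = p ^ (n * (n - 1) / 2) * x ^ n := by
    have step1 : ∀ k ∈ Finset.range (n + 1),
        pqBinom p q n k * b k * f (n - k) x
        = ∑ m ∈ Finset.range (n + 1 - k),
            (p ^ (m * (m - 1) / 2) * x ^ m) *
              (pqBinom p q n k * b k * (pqBinom p q (n - k) (n - k - m) * a (n - k - m))) := by
      intro k hk
      rw [Finset.mem_range] at hk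
      rw [hf, Finset.mul_sum]
      have hnk : n - k + 1 = n + 1 - k := by omega
      rw [← hnk, ← Finset.sum_range_reflect]
      refine Finset.sum_congr rfl fun m hm => ?_
      rw [Finset.mem_range] at hm
      have h1 : n - k + 1 - 1 - m = n - k - m := by omega
      have h2 : n - k - (n - k - m) = m := by omega
      rw [h1, h2]
      ring
    rw [Finset.sum_congr rfl step1, sum_triangle_swap]
    have step2 : ∀ m ∈ Finset.range (n + 1),
        ∑ k ∈ Finset.range (n + 1 - m),
            (p ^ (m * (m - 1) / 2) * x ^ m) *
              (pqBinom p q n k * b k * (pqBinom p q (n - k) (n - k - m) * a (n - k - m)))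
        = (p ^ (m * (m - 1) / 2) * x ^ m) * pqBinom p q n m * (if n - m = 0 then 1 else 0) := by
      intro m hm
      rw [Finset.mem_range] at hm
      have hnm : n + 1 - m = (n - m) + 1 := by omega
      rw [hnm, ← hb' (n - m), Finset.mul_sum, Finset.sum_congr rfl]
      intro k hk
      rw [Finset.mem_range] at hk
      have hkm : k + m ≤ n := by omega
      have e1 : n - k - m = n - k - (n - k - (n - k - m)) := by omega
      have e2 : pqBinom p q (n - k) (n - k - m) = pqBinom p q (n - k) m := by
        have : n - k - m = (n - k) - m := rfl
        rw [this, pqBinom_symm p q (by omega : m ≤ n - k)]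
      rw [e2]
      have e3 : pqBinom p q n k * pqBinom p q (n - k) m
          = pqBinom p q n m * pqBinom p q (n - m) k := pqBinom_mul hq hpq hkm
      have e4 : n - k - m = n - m - k := by omega
      calc (p ^ (m * (m - 1) / 2) * x ^ m) *
              (pqBinom p q n k * b k * (pqBinom p q (n - k) m * a (n - k - m)))
          = (p ^ (m * (m - 1) / 2) * x ^ m) *
              ((pqBinom p q n k * pqBinom p q (n - k) m) * b k * a (n - k - m)) := by ring
        _ = (p ^ (m * (m - 1) / 2) * x ^ m) * pqBinom p q n m *
              (pqBinom p q (n - m) k * b k * a (n - m - k)) := by rw [e3, e4]; ring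
    rw [Finset.sum_congr rfl step2]
    rw [Finset.sum_eq_single n]
    · rw [pqBinom_self hq hpq, Nat.sub_self, if_pos rfl]
      ring
    · intro m hm hmn
      rw [Finset.mem_range] at hm
      rw [if_neg (by omega), mul_zero]
    · intro h
      exact absurd (Finset.self_mem_range_succ n) h
  rw [key, inv_mul_cancel_left₀ (by positivity)]
end
end

section
/- The determining series of the (p,q)-Hermite polynomials, F_{p,q}(t) = ∑_{m=0}^{∞} (−1)^m p^{m(m−1)} t^{2m}/[2m]_{p,q}!!, satisfies the identity D_{p,q} F_{p,q}(t) = −t · F_{p,q}(pt) in ℝ⟦t⟧, where F_{p,q}(pt) = ∑_{m=0}^{∞} (−1)^m p^{m(m−1)} p^{2m} t^{2m}/[2m]_{p,q}!!. -/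
noncomputable section
open Finset Polynomial

/-- the determining series of the (p,q)-Hermite polynomials satisfies
D F(t) = -t F(pt) in the formal power series ring. -/
theorem pq_hermite_determining_series (p q : ℝ) (hq : 0 < q) (hpq : q < p) :
    pqDerivPS p q
        (PowerSeries.mk fun n =>
          if Even n then (-1 : ℝ) ^ (n / 2) * p ^ ((n / 2) * (n / 2 - 1)) / pqDoubleFact p q (n / 2)
          else 0)
      = -(PowerSeries.X *
          PowerSeries.mk fun n =>
            if Even n then
              (-1 : ℝ) ^ (n / 2) * p ^ ((n / 2) * (n / 2 - 1)) * p ^ n / pqDoubleFact p q (n / 2)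
            else 0) := by
  have hnum : ∀ n : ℕ, 0 < n → 0 < pqNum p q n := by
    intro n hn
    have h1 : q ^ n < p ^ n := pow_lt_pow_left₀ hpq hq.le hn.ne'
    exact div_pos (sub_pos.mpr h1) (sub_pos.mpr hpq)
  have hdf : ∀ m, 0 < pqDoubleFact p q m := by
    intro m
    refine Finset.prod_pos fun k hk => hnum _ ?_
    have := (Finset.mem_Icc.mp hk).1; omega
  ext n
  simp only [pqDerivPS, PowerSeries.coeff_mk, map_neg]
  rcases Nat.even_or_odd n with he | ho
  · have h1 : ¬ Even (n + 1) := by simp [Nat.even_add_one, he]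
    rw [if_neg h1]
    cases n with
    | zero => simp
    | succ k =>
      have hk : ¬ Even k := by
        rw [Nat.even_add_one] at he; simpa using he
      rw [PowerSeries.coeff_succ_X_mul, PowerSeries.coeff_mk, if_neg hk]
      simp
  · obtain ⟨m, rfl⟩ := ho
    have h1 : Even (2 * m + 1 + 1) := ⟨m + 1, by ring⟩
    have h2 : Even (2 * m) := ⟨m, by ring⟩
    rw [if_pos h1, PowerSeries.coeff_succ_X_mul, PowerSeries.coeff_mk, if_pos h2]
    have e1 : (2 * m + 1 + 1) / 2 = m + 1 := by omega
    have e2 : (2 * m) / 2 = m := by omega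
    rw [e1, e2]
    have hstep : pqDoubleFact p q (m + 1) = pqDoubleFact p q m * pqNum p q (2 * (m + 1)) := by
      unfold pqDoubleFact
      rw [Finset.prod_Icc_succ_top (by omega)]
    have hpow : p ^ ((m + 1) * (m + 1 - 1)) = p ^ (m * (m - 1)) * p ^ (2 * m) := by
      rw [← pow_add]
      congr 1
      cases m with
      | zero => rfl
      | succ s => simp only [Nat.add_sub_cancel]; ring
    have hn2 : pqNum p q (2 * (m + 1)) ≠ 0 := (hnum _ (by omega)).ne'
    have hd : pqDoubleFact p q m ≠ 0 := (hdf m).ne'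
    rw [hstep, hpow]
    have : (2 : ℕ) * m + 1 + 1 = 2 * (m + 1) := by ring
    rw [this]
    field_simp
    ring
end
end
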